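/- Let (V, ⟨·,·⟩) be a real inner product space, β a continuous linear functional on V with operator norm ‖β‖ < 1, and F(y) := ‖y‖ + β(y). Suppose n, u ∈ V satisfy F(n) = 1, F(u) = 1, and g_n(n,u) = 0, where g_n(a,b) := (1/2)·D²(F²)(n)[a,b]. Then g_n(u,u) = F(−u)/(1 − β(n)). -/

import Mathlib

open scoped RealInnerProductSpace

/-- The fundamental tensor `g_y(u, v) := (1/2) D²(F²)(y)[u, v]` of the Randers norm
`F(y) = ‖y‖ + β(y)` on a real inner product space. -/
noncomputable def randersG (V : Type*) [NormedAddCommGroup V] [InnerProductSpace ℝ V]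
    (β : V →L[ℝ] ℝ) (y u v : V) : ℝ :=
  (1 / 2) * (fderiv ℝ (fderiv ℝ (fun x => (‖x‖ + β x) ^ 2)) y u) v

section Aux
variable {V : Type*} [NormedAddCommGroup V] [InnerProductSpace ℝ V]


lemma hasFDerivAt_norm'' {x : V} (hx : x ≠ 0) :
    HasFDerivAt (fun y : V => ‖y‖) (‖x‖⁻¹ • (innerSL ℝ x : V →L[ℝ] ℝ)) x := by
  have h1 : HasFDerivAt (fun y : V => ‖y‖ ^ 2) (2 • (innerSL ℝ x : V →L[ℝ] ℝ)) x :=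
    (hasStrictFDerivAt_norm_sq x).hasFDerivAt
  have h2 : HasDerivAt Real.sqrt (1 / (2 * Real.sqrt (‖x‖ ^ 2))) (‖x‖ ^ 2) :=
    Real.hasDerivAt_sqrt (pow_ne_zero 2 (norm_ne_zero_iff.mpr hx))
  have h3 := h2.comp_hasFDerivAt x h1
  have heq : (Real.sqrt ∘ fun y : V => ‖y‖ ^ 2) = fun y : V => ‖y‖ := by
    funext y; simp [Function.comp, Real.sqrt_sq (norm_nonneg y)]
  rw [heq] at h3
  have hx' : (0:ℝ) < ‖x‖ := norm_pos_iff.mpr hx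
  have hs : (1 / (2 * Real.sqrt (‖x‖ ^ 2))) • (2 • (innerSL ℝ x : V →L[ℝ] ℝ))
      = ‖x‖⁻¹ • (innerSL ℝ x : V →L[ℝ] ℝ) := by
    ext v
    simp [Real.sqrt_sq (norm_nonneg x)]
    field_simp
  rwa [hs] at h3

noncomputable def randersD (β : V →L[ℝ] ℝ) (x : V) : V →L[ℝ] ℝ :=
  (2 * (‖x‖ + β x)) • (‖x‖⁻¹ • (innerSL ℝ x : V →L[ℝ] ℝ) + β)

lemma hasFDerivAt_phi (β : V →L[ℝ] ℝ) {x : V} (hx : x ≠ 0) :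
    HasFDerivAt (fun y : V => (‖y‖ + β y) ^ 2) (randersD β x) x := by
  have hF : HasFDerivAt (fun y : V => ‖y‖ + β y)
      (‖x‖⁻¹ • (innerSL ℝ x : V →L[ℝ] ℝ) + β) x :=
    (hasFDerivAt_norm'' hx).add β.hasFDerivAt
  have h := hF.fun_mul hF
  have hfun : (fun y : V => (‖y‖ + β y) ^ 2) = fun y : V => (‖y‖ + β y) * (‖y‖ + β y) := by
    funext y; ring
  rw [hfun]
  refine h.congr_fderiv ?_
  ext v
  simp [randersD]
  ring

example (β : V →L[ℝ] ℝ) {n : V} (hn0 : n ≠ 0) :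
    fderiv ℝ (fun y : V => (‖y‖ + β y) ^ 2) =ᶠ[nhds n] randersD β := by
  filter_upwards [isOpen_compl_singleton.mem_nhds hn0]
  intro x hx
  exact (hasFDerivAt_phi β hx).fderiv

noncomputable def innerT (V : Type*) [NormedAddCommGroup V] [InnerProductSpace ℝ V] :
    V →L[ℝ] V →L[ℝ] ℝ := innerSL ℝ

@[simp] lemma innerT_apply (x v : V) : innerT V x v = ⟪x, v⟫ := rfl

theorem randers_tangent_bound'
    (β : V →L[ℝ] ℝ) (hβ : ‖β‖ < 1)
    (n u : V) (hn : ‖n‖ + β n = 1) (hu : ‖u‖ + β u = 1)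
    (horth : (1 / 2) * (fderiv ℝ (fderiv ℝ (fun x => (‖x‖ + β x) ^ 2)) n n) u = 0) :
    (1 / 2) * (fderiv ℝ (fderiv ℝ (fun x => (‖x‖ + β x) ^ 2)) n u) u
      = (‖-u‖ + β (-u)) / (1 - β n) := by
  have habs : |β n| ≤ ‖β‖ * ‖n‖ := by simpa [Real.norm_eq_abs] using β.le_opNorm n
  have hN : (0:ℝ) < ‖n‖ := by nlinarith [le_abs_self (β n), norm_nonneg n, norm_nonneg β]
  have hn0 : n ≠ 0 := fun h => by simp [h] at hN
  -- first derivative, eventually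
  have hev : fderiv ℝ (fun y : V => (‖y‖ + β y) ^ 2) =ᶠ[nhds n] randersD β := by
    filter_upwards [isOpen_compl_singleton.mem_nhds hn0]
    intro x hx
    exact (hasFDerivAt_phi β hx).fderiv
  -- second derivative pieces
  have hc : HasFDerivAt (fun x : V => ‖x‖⁻¹)
      ((-(‖n‖ ^ 2)⁻¹) • (‖n‖⁻¹ • (innerSL ℝ n : V →L[ℝ] ℝ))) n := by
    have := (hasDerivAt_inv hN.ne').comp_hasFDerivAt n (hasFDerivAt_norm'' hn0)
    simpa [Function.comp_def] using this
  have hB : HasFDerivAt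
      (fun x : V => ‖x‖⁻¹ • (innerSL ℝ x : V →L[ℝ] ℝ) + β)
      (‖n‖⁻¹ • innerT V
        + (((-(‖n‖ ^ 2)⁻¹) • (‖n‖⁻¹ • (innerSL ℝ n : V →L[ℝ] ℝ)))).smulRight
            (innerSL ℝ n : V →L[ℝ] ℝ)) n :=
    (hc.smul (innerT V).hasFDerivAt).add_const β
  have ha : HasFDerivAt (fun x : V => 2 * (‖x‖ + β x))
      ((2:ℝ) • (‖n‖⁻¹ • (innerSL ℝ n : V →L[ℝ] ℝ) + β)) n :=
    ((hasFDerivAt_norm'' hn0).add β.hasFDerivAt).const_mul 2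
  have hD := ha.smul hB
  have key : fderiv ℝ (fderiv ℝ (fun x : V => (‖x‖ + β x) ^ 2)) n
      = (2 * (‖n‖ + β n)) • (‖n‖⁻¹ • innerT V
        + (((-(‖n‖ ^ 2)⁻¹) • (‖n‖⁻¹ • (innerSL ℝ n : V →L[ℝ] ℝ)))).smulRight
            (innerSL ℝ n : V →L[ℝ] ℝ))
        + ((2:ℝ) • (‖n‖⁻¹ • (innerSL ℝ n : V →L[ℝ] ℝ) + β)).smulRight
            (‖n‖⁻¹ • (innerSL ℝ n : V →L[ℝ] ℝ) + β) := by
    rw [hev.fderiv_eq]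
    exact hD.fderiv
  rw [key] at horth ⊢
  simp only [ContinuousLinearMap.add_apply, ContinuousLinearMap.smul_apply,
    ContinuousLinearMap.smulRight_apply, ContinuousLinearMap.coe_smul', Pi.smul_apply,
    innerT_apply, innerSL_apply_apply, smul_eq_mul, norm_neg, map_neg] at horth ⊢
  have hnn : (inner ℝ n n : ℝ) = ‖n‖ ^ 2 := real_inner_self_eq_norm_sq n
  have huu : (inner ℝ u u : ℝ) = ‖u‖ ^ 2 := real_inner_self_eq_norm_sq u
  rw [hnn] at horth
  rw [huu]
  have hNne : ‖n‖ ≠ 0 := hN.ne'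
  have h1b : 1 - β n = ‖n‖ := by linarith
  rw [h1b]
  field_simp at horth ⊢
  have h2 : (‖n‖ ^ 2 + β n * ‖n‖) = ‖n‖ := by linear_combination ‖n‖ * hn
  have hp : (inner ℝ n u : ℝ) + β u * ‖n‖ = 0 := by
    linear_combination horth - (inner ℝ n u + ‖n‖ * β u) * hn
  have hp' : (inner ℝ n u : ℝ) = -(β u * ‖n‖) := by linarith
  rw [hp']
  linear_combination (‖n‖ ^ 2 * (‖u‖ ^ 2 - (β u) ^ 2)) * hn
    + (‖n‖ ^ 2 * (‖u‖ - β u)) * hu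

end Aux

/-- Section 6 of the paper: for the Randers norm `F = ‖·‖ + β` with `‖β‖ < 1`, if `F(n) = 1`,
`F(u) = 1` and `g_n(n, u) = 0`, then `g_n(u, u) = F(−u)/(1 − β(n))`. -/
theorem randers_tangent_bound
    (V : Type*) [NormedAddCommGroup V] [InnerProductSpace ℝ V]
    (β : V →L[ℝ] ℝ) (hβ : ‖β‖ < 1)
    (n u : V) (hn : ‖n‖ + β n = 1) (hu : ‖u‖ + β u = 1)
    (horth : randersG V β n n u = 0) :
    randersG V β n u u = (‖-u‖ + β (-u)) / (1 - β n) := by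
  unfold randersG at horth ⊢
  exact randers_tangent_bound' β hβ n u hn hu horth
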